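/- Let V be a shift on a complex Hilbert space H, i.e., an isometry with V^{*n} → 0 strongly, and let q be a complex number with |q| = 1. Then for every h ∈ H the series Σ_{n≥0} qⁿ Vⁿ(I − VV*)V^{*n}h converges in H, and the operator 𝔯_q : h ↦ Σ_{n≥0} qⁿ Vⁿ(I − VV*)V^{*n}h is a unitary on H satisfying 𝔯_q* = 𝔯_{q̄} and 𝔯_q V = q V 𝔯_q. -/

import Mathlib

open ContinuousLinearMap Filter
open scoped ComplexInnerProductSpace

namespace Stmt8Aux

variable {H : Type*} [NormedAddCommGroup H] [InnerProductSpace ℂ H] [CompleteSpace H]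

noncomputable def e (V : H →L[ℂ] H) (n : ℕ) : H →L[ℂ] H :=
  (V ^ n) ∘L ((1 - V ∘L adjoint V) ∘L ((adjoint V) ^ n))

variable {V : H →L[ℂ] H}

theorem hWV (hiso : adjoint V ∘L V = 1) (x : H) : adjoint V (V x) = x := by
  have := ContinuousLinearMap.ext_iff.mp hiso x
  simpa using this

theorem normV (hiso : adjoint V ∘L V = 1) (x : H) : ‖V x‖ = ‖x‖ := by
  have h : (inner ℂ (V x) (V x) : ℂ) = inner ℂ x x := by
    rw [← adjoint_inner_left, hWV hiso]
  rw [@norm_eq_sqrt_re_inner ℂ _ _ _ _ (V x), @norm_eq_sqrt_re_inner ℂ _ _ _ _ x, h]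

theorem normVn (hiso : adjoint V ∘L V = 1) (n : ℕ) (x : H) : ‖(V ^ n) x‖ = ‖x‖ := by
  induction n with
  | zero => simp
  | succ n ih =>
    rw [pow_succ', mul_apply_eq_comp, normV hiso, ih]

theorem hWnVn (hiso : adjoint V ∘L V = 1) (n : ℕ) (x : H) :
    ((adjoint V) ^ n) ((V ^ n) x) = x := by
  induction n with
  | zero => simp
  | succ n ih =>
    rw [pow_succ (adjoint V), pow_succ' V, mul_apply_eq_comp, mul_apply_eq_comp, hWV hiso, ih]

theorem hPV (hiso : adjoint V ∘L V = 1) (x : H) : (1 - V ∘L adjoint V) (V x) = 0 := by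
  simp [sub_apply, comp_apply, hWV hiso]

theorem hWP (hiso : adjoint V ∘L V = 1) (x : H) :
    adjoint V ((1 - V ∘L adjoint V) x) = 0 := by
  simp [sub_apply, comp_apply, map_sub, hWV hiso]

theorem hPP (hiso : adjoint V ∘L V = 1) (x : H) :
    (1 - V ∘L adjoint V) ((1 - V ∘L adjoint V) x) = (1 - V ∘L adjoint V) x := by
  conv_lhs => rw [sub_apply (1 : H →L[ℂ] H) (V ∘L adjoint V) ((1 - V ∘L adjoint V) x)]
  rw [one_apply_eq_self, comp_apply, hWP hiso, map_zero, sub_zero]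


theorem e_apply (n : ℕ) (x : H) :
    e V n x = (V ^ n) ((1 - V ∘L adjoint V) (((adjoint V) ^ n) x)) := rfl

theorem e_zero (hiso : adjoint V ∘L V = 1) (x : H) : e V 0 (V x) = 0 := by
  simp [e_apply, hPV hiso]

theorem e_succ_V (hiso : adjoint V ∘L V = 1) (n : ℕ) (x : H) :
    e V (n + 1) (V x) = V (e V n x) := by
  rw [e_apply, e_apply]
  rw [pow_succ (adjoint V), mul_apply_eq_comp, hWV hiso, pow_succ' V, mul_apply_eq_comp]

theorem e_V_eq_zero (hiso : adjoint V ∘L V = 1) (n : ℕ) (x : H) :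
    e V n ((V ^ (n + 1)) x) = 0 := by
  rw [e_apply, pow_succ V, mul_apply_eq_comp, hWnVn hiso, hPV hiso, map_zero]

theorem e_apply_e (hiso : adjoint V ∘L V = 1) (m n : ℕ) (x : H) :
    e V m (e V n x) = if m = n then e V n x else 0 := by
  rcases lt_trichotomy m n with hmn | hmn | hmn
  · rw [if_neg hmn.ne]
    obtain ⟨k, rfl⟩ : ∃ k, n = m + (k + 1) := ⟨n - m - 1, by omega⟩
    rw [e_apply, e_apply, pow_add V m (k + 1), mul_apply_eq_comp, hWnVn hiso m,
      pow_succ' V k, mul_apply_eq_comp, hPV hiso, map_zero]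
  · subst hmn
    rw [if_pos rfl, e_apply, e_apply, hWnVn hiso, hPP hiso]
  · rw [if_neg hmn.ne']
    obtain ⟨k, rfl⟩ : ∃ k, m = n + (k + 1) := ⟨m - n - 1, by omega⟩
    have hsplit : (adjoint V) ^ (n + (k + 1)) = (adjoint V) ^ (k + 1) * (adjoint V) ^ n := by
      rw [add_comm, pow_add]
    rw [e_apply, e_apply, hsplit, mul_apply_eq_comp, hWnVn hiso n, pow_succ (adjoint V) k,
      mul_apply_eq_comp, hWP hiso, map_zero, map_zero, map_zero]


theorem e_star (n : ℕ) : adjoint (e V n) = e V n := by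
  have h : e V n = V ^ n * ((1 - V * adjoint V) * (adjoint V) ^ n) := rfl
  rw [h, ← star_eq_adjoint]
  simp only [← star_eq_adjoint]
  simp only [star_mul, star_pow, star_sub, star_one, star_star]
  rw [mul_assoc]

theorem e_sa (n : ℕ) (x y : H) : (inner ℂ (e V n x) y : ℂ) = inner ℂ x (e V n y) := by
  conv_lhs => rw [← e_star (V := V) n, adjoint_inner_left]

theorem e_orth (hiso : adjoint V ∘L V = 1) {m n : ℕ} (hmn : m ≠ n) (x y : H) :
    (inner ℂ (e V m x) (e V n y) : ℂ) = 0 := by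
  rw [e_sa, e_apply_e hiso, if_neg hmn, inner_zero_right]

theorem e_telescope (n : ℕ) (x : H) :
    e V n x = (V ^ n) (((adjoint V) ^ n) x) - (V ^ (n + 1)) (((adjoint V) ^ (n + 1)) x) := by
  rw [e_apply, sub_apply, one_apply_eq_self, map_sub, comp_apply]
  congr 1
  rw [pow_succ V, pow_succ' (adjoint V), mul_apply_eq_comp, mul_apply_eq_comp]

theorem sum_range_e (n : ℕ) (x : H) :
    ∑ i ∈ Finset.range n, e V i x = x - (V ^ n) (((adjoint V) ^ n) x) := by
  have h := Finset.sum_range_sub' (fun i => (V ^ i) (((adjoint V) ^ i) x)) n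
  rw [Finset.sum_congr rfl fun i _ => e_telescope i x, h]
  simp

theorem e_orth_tail (hiso : adjoint V ∘L V = 1) (n : ℕ) (x : H) :
    (inner ℂ (e V n x) ((V ^ (n + 1)) (((adjoint V) ^ (n + 1)) x)) : ℂ) = 0 := by
  rw [e_sa, e_V_eq_zero hiso, inner_zero_right]

theorem norm_e_sq (hiso : adjoint V ∘L V = 1) (n : ℕ) (x : H) :
    ‖e V n x‖ ^ 2 =
      ‖((adjoint V) ^ n) x‖ ^ 2 - ‖((adjoint V) ^ (n + 1)) x‖ ^ 2 := by
  have hdecomp : (V ^ n) (((adjoint V) ^ n) x) =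
      e V n x + (V ^ (n + 1)) (((adjoint V) ^ (n + 1)) x) := by
    rw [e_telescope]; abel
  have hpy := @norm_add_sq ℂ _ _ _ _ (e V n x) ((V ^ (n + 1)) (((adjoint V) ^ (n + 1)) x))
  rw [e_orth_tail hiso, map_zero] at hpy
  have := congrArg (fun y => ‖y‖ ^ 2) hdecomp
  simp only [hpy, mul_zero, add_zero, zero_add, normVn hiso] at this ⊢
  linarith

theorem sum_range_norm_e_sq_le (hiso : adjoint V ∘L V = 1) (N : ℕ) (x : H) :
    ∑ n ∈ Finset.range N, ‖e V n x‖ ^ 2 ≤ ‖x‖ ^ 2 := by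
  have h := Finset.sum_range_sub' (fun n => ‖((adjoint V) ^ n) x‖ ^ 2) N
  rw [Finset.sum_congr rfl fun n _ => norm_e_sq hiso n x, h]
  simp only [pow_zero, one_apply_eq_self]
  have := sq_nonneg ‖((adjoint V) ^ N) x‖
  linarith

theorem summable_norm_e_sq (hiso : adjoint V ∘L V = 1) (x : H) :
    Summable (fun n => ‖e V n x‖ ^ 2) :=
  summable_of_sum_range_le (fun n => sq_nonneg _) (fun N => sum_range_norm_e_sq_le hiso N x)


theorem pythag (hiso : adjoint V ∘L V = 1) (q : ℂ) (x : H) (s : Finset ℕ) :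
    ‖∑ n ∈ s, q ^ n • e V n x‖ ^ 2 = ∑ n ∈ s, ‖q ^ n • e V n x‖ ^ 2 := by
  have key : (inner ℂ (∑ n ∈ s, q ^ n • e V n x) (∑ n ∈ s, q ^ n • e V n x) : ℂ)
      = ∑ n ∈ s, (inner ℂ (q ^ n • e V n x) (q ^ n • e V n x) : ℂ) := by
    rw [sum_inner]
    refine Finset.sum_congr rfl fun m hm => ?_
    rw [inner_sum, Finset.sum_eq_single m (fun n hn hne => ?_) (fun h => absurd hm h)]
    rw [inner_smul_left, inner_smul_right, e_orth hiso (Ne.symm hne), mul_zero, mul_zero]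
  rw [inner_self_eq_norm_sq_to_K] at key
  conv at key => rw [Finset.sum_congr rfl fun n _ => inner_self_eq_norm_sq_to_K (𝕜 := ℂ) _]
  exact_mod_cast key

theorem summable_q (hiso : adjoint V ∘L V = 1) (q : ℂ) (hq : ‖q‖ = 1) (x : H) :
    Summable (fun n => q ^ n • e V n x) := by
  have hfam : OrthogonalFamily ℂ (fun n => ↥(ℂ ∙ (e V n x)))
      (fun n => (ℂ ∙ (e V n x)).subtypeₗᵢ) := by
    intro m n hmn u w
    obtain ⟨c, hc⟩ := Submodule.mem_span_singleton.mp u.2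
    obtain ⟨d, hd⟩ := Submodule.mem_span_singleton.mp w.2
    show (inner ℂ (u : H) (w : H) : ℂ) = 0
    rw [← hc, ← hd, inner_smul_left, inner_smul_right, e_orth hiso hmn, mul_zero, mul_zero]
  let f : ∀ n, ↥(ℂ ∙ (e V n x)) := fun n =>
    ⟨q ^ n • e V n x, Submodule.smul_mem _ _ (Submodule.mem_span_singleton_self _)⟩
  have hsum2 : Summable (fun n => ‖f n‖ ^ 2) := by
    have heq : ∀ n, ‖f n‖ ^ 2 = ‖e V n x‖ ^ 2 := by
      intro n
      have h1 : ‖f n‖ = ‖q ^ n • e V n x‖ := rfl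
      rw [h1, norm_smul, norm_pow, hq, one_pow, one_mul]
    simpa only [heq] using summable_norm_e_sq hiso x
  exact (hfam.summable_iff_norm_sq_summable f).mpr hsum2

theorem norm_hasSum_le (hiso : adjoint V ∘L V = 1) {q : ℂ} (hq : ‖q‖ = 1) {x a : H}
    (h : HasSum (fun n => q ^ n • e V n x) a) : ‖a‖ ≤ ‖x‖ := by
  have ht : Tendsto (fun N => ‖∑ n ∈ Finset.range N, q ^ n • e V n x‖ ^ 2)
      atTop (nhds (‖a‖ ^ 2)) :=
    ((continuous_norm.tendsto a).comp h.tendsto_sum_nat).pow 2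
  have hb : ∀ N, ‖∑ n ∈ Finset.range N, q ^ n • e V n x‖ ^ 2 ≤ ‖x‖ ^ 2 := by
    intro N
    rw [pythag hiso q x]
    calc ∑ n ∈ Finset.range N, ‖q ^ n • e V n x‖ ^ 2
        = ∑ n ∈ Finset.range N, ‖e V n x‖ ^ 2 := by
          refine Finset.sum_congr rfl fun n _ => ?_
          rw [norm_smul, norm_pow, hq, one_pow, one_mul]
      _ ≤ ‖x‖ ^ 2 := sum_range_norm_e_sq_le hiso N x
  have hle : ‖a‖ ^ 2 ≤ ‖x‖ ^ 2 := le_of_tendsto ht (Eventually.of_forall hb)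
  nlinarith [norm_nonneg a, norm_nonneg x]


noncomputable def R (V : H →L[ℂ] H) (hiso : adjoint V ∘L V = 1) (q : ℂ) (hq : ‖q‖ = 1) :
    H →L[ℂ] H :=
  LinearMap.mkContinuous
    { toFun := fun x => ∑' n, q ^ n • e V n x
      map_add' := fun x y => by
        have hx := (summable_q hiso q hq x).hasSum
        have hy := (summable_q hiso q hq y).hasSum
        have h : HasSum (fun n => q ^ n • e V n (x + y))
            ((∑' n, q ^ n • e V n x) + ∑' n, q ^ n • e V n y) := by
          simpa only [map_add, smul_add] using hx.add hy
        exact h.tsum_eq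
      map_smul' := fun c x => by
        have hx := (summable_q hiso q hq x).hasSum
        have h : HasSum (fun n => q ^ n • e V n (c • x)) (c • ∑' n, q ^ n • e V n x) := by
          simpa only [map_smul, smul_comm c] using hx.const_smul c
        exact h.tsum_eq }
    1
    (fun x => by
      rw [one_mul]
      exact norm_hasSum_le hiso hq (summable_q hiso q hq x).hasSum)

theorem R_hasSum (hiso : adjoint V ∘L V = 1) (q : ℂ) (hq : ‖q‖ = 1) (x : H) :
    HasSum (fun n => q ^ n • e V n x) (R V hiso q hq x) :=
  (summable_q hiso q hq x).hasSum

theorem hasSum_e (hiso : adjoint V ∘L V = 1)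
    (hshift : ∀ h : H, Tendsto (fun n : ℕ => ((adjoint V) ^ n) h) atTop (nhds 0)) (x : H) :
    HasSum (fun n => e V n x) x := by
  have hs : Summable (fun n => e V n x) := by
    simpa only [one_pow, one_smul] using summable_q hiso 1 (by norm_num) x
  have h2 := hs.hasSum
  have h3 : Tendsto (fun N => ∑ n ∈ Finset.range N, e V n x) atTop (nhds x) := by
    simp only [sum_range_e]
    have hz : Tendsto (fun N : ℕ => (V ^ N) (((adjoint V) ^ N) x)) atTop (nhds 0) := by
      rw [tendsto_zero_iff_norm_tendsto_zero]
      simp only [normVn hiso]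
      exact tendsto_zero_iff_norm_tendsto_zero.mp (hshift x)
    simpa using tendsto_const_nhds.sub hz
  have h4 := h2.tendsto_sum_nat
  rwa [tendsto_nhds_unique h4 h3] at h2

theorem e_R (hiso : adjoint V ∘L V = 1) (q : ℂ) (hq : ‖q‖ = 1) (n : ℕ) (x : H) :
    e V n (R V hiso q hq x) = q ^ n • e V n x := by
  have h := (R_hasSum hiso q hq x).mapL (e V n)
  have h2 : HasSum (fun m => if m = n then q ^ n • e V n x else 0)
      (e V n (R V hiso q hq x)) := by
    refine h.congr_fun fun m => ?_
    rw [map_smul, e_apply_e hiso n m]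
    by_cases hmn : m = n
    · subst hmn; simp
    · rw [if_neg (Ne.symm hmn), if_neg hmn, smul_zero]
  exact ((hasSum_ite_eq n (q ^ n • e V n x)).unique h2).symm


theorem R_left_inv (hiso : adjoint V ∘L V = 1)
    (hshift : ∀ h : H, Tendsto (fun n : ℕ => ((adjoint V) ^ n) h) atTop (nhds 0))
    {q q' : ℂ} (hq : ‖q‖ = 1) (hq' : ‖q'‖ = 1) (hqq' : q' * q = 1) (x : H) :
    R V hiso q' hq' (R V hiso q hq x) = x := by
  have hA := R_hasSum hiso q' hq' (R V hiso q hq x)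
  have hA' : HasSum (fun n => e V n x) (R V hiso q' hq' (R V hiso q hq x)) := by
    refine hA.congr_fun fun n => ?_
    rw [e_R hiso q hq, smul_smul, ← mul_pow, hqq', one_pow, one_smul]
  exact hA'.unique (hasSum_e hiso hshift x)

theorem R_adj (hiso : adjoint V ∘L V = 1) (q : ℂ) (hq : ‖q‖ = 1)
    (hqc : ‖(starRingEnd ℂ) q‖ = 1) :
    adjoint (R V hiso q hq) = R V hiso ((starRingEnd ℂ) q) hqc := by
  refine ((eq_adjoint_iff _ _).mpr ?_).symm
  intro x y
  have hB : HasSum (fun n => (inner ℂ x (q ^ n • e V n y) : ℂ))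
      (inner ℂ x (R V hiso q hq y)) := (R_hasSum hiso q hq y).mapL (innerSL ℂ x)
  have hC : HasSum (fun n => (inner ℂ y (((starRingEnd ℂ) q) ^ n • e V n x) : ℂ))
      (inner ℂ y (R V hiso ((starRingEnd ℂ) q) hqc x)) :=
    (R_hasSum hiso ((starRingEnd ℂ) q) hqc x).mapL (innerSL ℂ y)
  have hC' := hC.map ((starRingEnd ℂ)).toAddMonoidHom RCLike.continuous_conj
  have hC'' : HasSum (fun n => (inner ℂ (((starRingEnd ℂ) q) ^ n • e V n x) y : ℂ))
      (inner ℂ (R V hiso ((starRingEnd ℂ) q) hqc x) y) := by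
    simpa only [Function.comp_def, RingHom.toAddMonoidHom_eq_coe, AddMonoidHom.coe_coe,
      inner_conj_symm] using hC'
  have hfinal : HasSum (fun n => (inner ℂ x (q ^ n • e V n y) : ℂ))
      (inner ℂ (R V hiso ((starRingEnd ℂ) q) hqc x) y) := by
    refine hC''.congr_fun fun n => ?_
    rw [inner_smul_right, inner_smul_left, map_pow, Complex.conj_conj, e_sa]
  exact hfinal.unique hB

theorem R_intertwine (hiso : adjoint V ∘L V = 1) (q : ℂ) (hq : ‖q‖ = 1) :
    (R V hiso q hq) ∘L V = q • (V ∘L R V hiso q hq) := by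
  ext x
  have hA := R_hasSum hiso q hq (V x)
  have hB0 := ((R_hasSum hiso q hq x).mapL V).const_smul q
  have hB : HasSum (fun n => q ^ (n + 1) • e V (n + 1) (V x))
      (q • V (R V hiso q hq x)) := by
    refine hB0.congr_fun fun n => ?_
    rw [e_succ_V hiso, map_smul, smul_smul, ← pow_succ']
  have hB' := (hasSum_nat_add_iff (f := fun m => q ^ m • e V m (V x)) 1).mp hB
  have hkey : R V hiso q hq (V x) = q • V (R V hiso q hq x) :=
    hA.unique (by simpa [e_zero hiso] using hB')
  simpa [comp_apply, smul_apply] using hkey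

end Stmt8Aux

theorem stmt_8 {H : Type*} [NormedAddCommGroup H] [InnerProductSpace ℂ H] [CompleteSpace H]
    (V : H →L[ℂ] H) (hiso : adjoint V ∘L V = 1)
    (hshift : ∀ h : H, Tendsto (fun n : ℕ => ((adjoint V) ^ n) h) atTop (nhds 0))
    (q : ℂ) (hq : ‖q‖ = 1) :
    (∀ h : H, Summable
      (fun n : ℕ => q ^ n • ((V ^ n) ((1 - V ∘L adjoint V) (((adjoint V) ^ n) h))))) ∧
    ∃ 𝔯q : H →L[ℂ] H,
      (∀ h : H, HasSum
        (fun n : ℕ => q ^ n • ((V ^ n) ((1 - V ∘L adjoint V) (((adjoint V) ^ n) h))))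
        (𝔯q h)) ∧
      adjoint 𝔯q ∘L 𝔯q = 1 ∧ 𝔯q ∘L adjoint 𝔯q = 1 ∧
      (∀ h : H, HasSum
        (fun n : ℕ => (starRingEnd ℂ q) ^ n •
          ((V ^ n) ((1 - V ∘L adjoint V) (((adjoint V) ^ n) h))))
        (adjoint 𝔯q h)) ∧
      𝔯q ∘L V = q • (V ∘L 𝔯q) := by
  have hqc : ‖(starRingEnd ℂ) q‖ = 1 := by rw [RCLike.norm_conj, hq]
  have hqq : (starRingEnd ℂ) q * q = 1 := by
    rw [mul_comm, Complex.mul_conj]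
    have h1 : Complex.normSq q = 1 := by
      rw [Complex.normSq_eq_norm_sq, hq, one_pow]
    rw [h1, Complex.ofReal_one]
  have hqq' : q * (starRingEnd ℂ) q = 1 := by rw [mul_comm]; exact hqq
  refine ⟨fun h => Stmt8Aux.summable_q hiso q hq h,
    Stmt8Aux.R V hiso q hq, fun h => Stmt8Aux.R_hasSum hiso q hq h, ?_, ?_, ?_, ?_⟩
  · rw [Stmt8Aux.R_adj hiso q hq hqc]
    ext x
    simp only [comp_apply, one_apply_eq_self]
    exact Stmt8Aux.R_left_inv hiso hshift hq hqc hqq x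
  · rw [Stmt8Aux.R_adj hiso q hq hqc]
    ext x
    simp only [comp_apply, one_apply_eq_self]
    exact Stmt8Aux.R_left_inv hiso hshift hqc hq hqq' x
  · intro h
    rw [Stmt8Aux.R_adj hiso q hq hqc]
    exact Stmt8Aux.R_hasSum hiso _ hqc h
  · exact Stmt8Aux.R_intertwine hiso q hq
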